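/- Existence and uniqueness of the Young integral: Let 1 ≤ p < 2 and let a, b : [0,1] → ℝ be (1/p)-Hölder continuous functions, say |a_t − a_s| ≤ H (t−s)^{1/p} and |b_t − b_s| ≤ H (t−s)^{1/p} for all s ≤ t. Set μ_{ts} = a_s (b_t − b_s). Then μ satisfies ‖μ_{ts} − (μ_{tu} + μ_{us})‖ ≤ H² (t − s)^{2/p} for all 0 ≤ s ≤ u ≤ t ≤ 1, and consequently there exists a constant C and a unique function φ : [0,1] → ℝ with φ₀ = 0 such that |φ_t − φ_s − a_s (b_t − b_s)| ≤ C (t − s)^{2/p} for all 0 ≤ s ≤ t ≤ 1 (uniqueness among functions vanishing at 0 satisfying such a bound for some constant). The function φ_t is the Young integral ∫₀ᵗ a db. -/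

import Mathlib

open Finset Filter

namespace YoungIntegralAux

noncomputable def mu (a b : ℝ → ℝ) (s t : ℝ) : ℝ := a s * (b t - b s)

variable {p H : ℝ} {a b : ℝ → ℝ}

lemma mu_self (a b : ℝ → ℝ) (s : ℝ) : mu a b s s = 0 := by simp [mu]

lemma rpow_twice (hp0 : 0 < p) {x : ℝ} (hx : 0 ≤ x) :
    x ^ (1/p) * x ^ (1/p) = x ^ (2/p) := by
  rcases hx.eq_or_lt with h | h
  · rw [← h, Real.zero_rpow (one_div_ne_zero (ne_of_gt hp0)),
      Real.zero_rpow (div_ne_zero two_ne_zero (ne_of_gt hp0)), mul_zero]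
  · rw [← Real.rpow_add h]
    congr 1
    ring

lemma chen (hp1 : 1 ≤ p) (hH : 0 ≤ H)
    (ha : ∀ s t : ℝ, 0 ≤ s → s ≤ t → t ≤ 1 → |a t - a s| ≤ H * (t - s) ^ (1 / p))
    (hb : ∀ s t : ℝ, 0 ≤ s → s ≤ t → t ≤ 1 → |b t - b s| ≤ H * (t - s) ^ (1 / p))
    {s u t : ℝ} (hs : 0 ≤ s) (hsu : s ≤ u) (hut : u ≤ t) (ht : t ≤ 1) :
    |mu a b s t - (mu a b u t + mu a b s u)| ≤ H ^ 2 * (t - s) ^ (2 / p) := by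
  have hp0 : 0 < p := by linarith
  have h1 : mu a b s t - (mu a b u t + mu a b s u) = -((a u - a s) * (b t - b u)) := by
    simp only [mu]; ring
  rw [h1, abs_neg, abs_mul]
  have hap : (0:ℝ) ≤ 1/p := div_nonneg one_pos.le hp0.le
  have e1 : (u - s) ^ (1/p) ≤ (t - s) ^ (1/p) :=
    Real.rpow_le_rpow (by linarith) (by linarith) hap
  have e2 : (t - u) ^ (1/p) ≤ (t - s) ^ (1/p) :=
    Real.rpow_le_rpow (by linarith) (by linarith) hap
  calc |a u - a s| * |b t - b u|
      ≤ (H * (u - s) ^ (1/p)) * (H * (t - u) ^ (1/p)) := by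
        apply mul_le_mul (ha s u hs hsu (hut.trans ht)) (hb u t (hs.trans hsu) hut ht)
          (abs_nonneg _) (mul_nonneg hH (Real.rpow_nonneg (by linarith) _))
    _ ≤ (H * (t - s) ^ (1/p)) * (H * (t - s) ^ (1/p)) := by
        apply mul_le_mul (by gcongr) (by gcongr)
          (mul_nonneg hH (Real.rpow_nonneg (by linarith) _))
          (mul_nonneg hH (Real.rpow_nonneg (by linarith) _))
    _ = H ^ 2 * (t - s) ^ (2/p) := by
        rw [← rpow_twice hp0 (by linarith : (0:ℝ) ≤ t - s)]; ring

lemma young (hp1 : 1 ≤ p) (hp2 : p < 2) (hH : 0 ≤ H)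
    (ha : ∀ s t : ℝ, 0 ≤ s → s ≤ t → t ≤ 1 → |a t - a s| ≤ H * (t - s) ^ (1 / p))
    (hb : ∀ s t : ℝ, 0 ≤ s → s ≤ t → t ≤ 1 → |b t - b s| ≤ H * (t - s) ^ (1 / p)) :
    ∀ (N : ℕ) (π : ℕ → ℝ), Monotone π → 0 ≤ π 0 → π N ≤ 1 →
      |(∑ k ∈ range N, mu a b (π k) (π (k + 1))) - mu a b (π 0) (π N)| ≤
        H ^ 2 * (2 * (π N - π 0)) ^ (2 / p) * ∑ j ∈ range N, (j : ℝ) ^ (-(2 / p)) := by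
  have hp0 : 0 < p := by linarith
  intro N
  induction N with
  | zero =>
    intro π _ _ _
    simp [mu_self]
  | succ N ih =>
    intro π hmono h0 h1
    rcases Nat.eq_zero_or_pos N with hN | hN
    · subst hN
      have h2 : (∑ k ∈ range 1, mu a b (π k) (π (k+1))) = mu a b (π 0) (π 1) := by simp
      rw [h2, sub_self, abs_zero]
      have h3 : (0:ℝ) ≤ π 1 - π 0 := sub_nonneg.2 (hmono (by omega))
      have h4 : (0:ℝ) ≤ (2 * (π 1 - π 0)) ^ (2/p) := Real.rpow_nonneg (by linarith) _
      have h5 : (0:ℝ) ≤ ∑ j ∈ range 1, (j : ℝ) ^ (-(2 / p)) := by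
        apply Finset.sum_nonneg
        intro i _
        exact Real.rpow_nonneg (Nat.cast_nonneg i) _
      positivity
    · have hts : 0 ≤ π (N+1) - π 0 := sub_nonneg.2 (hmono (by omega))
      -- pigeonhole: a point whose removal is cheap
      obtain ⟨j, hjN, hjle⟩ :
          ∃ j, j < N ∧ π (j+2) - π j ≤ 2 * (π (N+1) - π 0) / N := by
        by_contra hcon
        push_neg at hcon
        have hlt : ∑ j ∈ range N, (2 * (π (N+1) - π 0) / N)
            < ∑ j ∈ range N, (π (j+2) - π j) := by
          apply Finset.sum_lt_sum_of_nonempty ⟨0, mem_range.2 hN⟩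
          intro i hi
          exact hcon i (mem_range.1 hi)
        have e1 : ∑ j ∈ range N, (π (j+2) - π j)
            = (π (N+1) - π 1) + (π N - π 0) := by
          have t1 : ∑ j ∈ range N, (π (j+2) - π j)
              = ∑ j ∈ range N, ((π (j+1+1) - π (j+1)) + (π (j+1) - π j)) := by
            apply Finset.sum_congr rfl; intro i _; ring_nf
          rw [t1, Finset.sum_add_distrib, Finset.sum_range_sub (fun j => π (j+1)),
            Finset.sum_range_sub π]
        have e2 : ∑ _j ∈ range N, (2 * (π (N+1) - π 0) / N) = 2 * (π (N+1) - π 0) := by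
          rw [Finset.sum_const, Finset.card_range, nsmul_eq_mul]
          have : (N:ℝ) ≠ 0 := Nat.cast_ne_zero.2 (by omega)
          field_simp
        rw [e1, e2] at hlt
        have hb1 : π 0 ≤ π 1 := hmono (by omega)
        have hb2 : π N ≤ π (N+1) := hmono (by omega)
        linarith
      -- the reduced partition
      set π' : ℕ → ℝ := fun k => if k < j + 1 then π k else π (k+1) with hπ'
      have hmono' : Monotone π' := by
        intro x y hxy
        simp only [hπ']
        split_ifs with h1 h2 h2
        · exact hmono hxy
        · exact hmono (by omega)
        · exact hmono (by omega)
        · exact hmono (by omega)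
      have hπ'0 : π' 0 = π 0 := by simp [hπ']
      have hπ'N : π' N = π (N+1) := by
        simp only [hπ']; rw [if_neg (by omega)]
      have key : ∑ k ∈ range (N+1), mu a b (π k) (π (k+1))
          = (∑ k ∈ range N, mu a b (π' k) (π' (k+1)))
            + (mu a b (π j) (π (j+1)) + mu a b (π (j+1)) (π (j+2))
               - mu a b (π j) (π (j+2))) := by
        have d1 : ∑ k ∈ range (N+1), mu a b (π k) (π (k+1))
            = (∑ k ∈ range j, mu a b (π k) (π (k+1)) + mu a b (π j) (π (j+1))
                + mu a b (π (j+1)) (π (j+1+1)))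
              + ∑ k ∈ Ico (j+2) (N+1), mu a b (π k) (π (k+1)) := by
          rw [← Finset.sum_range_add_sum_Ico _ (show j+2 ≤ N+1 by omega),
            Finset.sum_range_succ, Finset.sum_range_succ]
        have d2 : ∑ k ∈ range N, mu a b (π' k) (π' (k+1))
            = (∑ k ∈ range j, mu a b (π' k) (π' (k+1)) + mu a b (π' j) (π' (j+1)))
              + ∑ k ∈ Ico (j+1) N, mu a b (π' k) (π' (k+1)) := by
          rw [← Finset.sum_range_add_sum_Ico _ (show j+1 ≤ N by omega),
            Finset.sum_range_succ]
        have d3 : ∑ k ∈ range j, mu a b (π' k) (π' (k+1))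
            = ∑ k ∈ range j, mu a b (π k) (π (k+1)) := by
          apply Finset.sum_congr rfl
          intro k hk
          have hk' := Finset.mem_range.1 hk
          simp only [hπ']
          rw [if_pos (by omega), if_pos (by omega)]
        have d4 : mu a b (π' j) (π' (j+1)) = mu a b (π j) (π (j+2)) := by
          simp only [hπ']
          rw [if_pos (by omega), if_neg (by omega)]
        have d5 : ∑ k ∈ Ico (j+1) N, mu a b (π' k) (π' (k+1))
            = ∑ k ∈ Ico (j+2) (N+1), mu a b (π k) (π (k+1)) := by
          rw [Finset.sum_Ico_eq_sum_range (fun k => mu a b (π' k) (π' (k+1))) (j+1) N,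
            Finset.sum_Ico_eq_sum_range (fun k => mu a b (π k) (π (k+1))) (j+2) (N+1)]
          rw [show N + 1 - (j+2) = N - (j+1) from by omega]
          apply Finset.sum_congr rfl
          intro i _
          simp only [hπ']
          rw [if_neg (by omega), if_neg (by omega)]
          rw [show j + 1 + i + 1 = j + 2 + i from by omega]
        rw [d1, d2, d3, d4, d5]
        ring
      have hchen : |mu a b (π j) (π (j+2))
          - (mu a b (π (j+1)) (π (j+2)) + mu a b (π j) (π (j+1)))|
          ≤ H ^ 2 * (π (j+2) - π j) ^ (2/p) := by
        apply chen hp1 hH ha hb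
        · exact le_trans h0 (hmono (by omega))
        · exact hmono (by omega)
        · exact hmono (by omega)
        · exact le_trans (hmono (show j+2 ≤ N+1 by omega)) h1
      have hdef : |mu a b (π j) (π (j+1)) + mu a b (π (j+1)) (π (j+2))
          - mu a b (π j) (π (j+2))|
          ≤ H ^ 2 * ((2 * (π (N+1) - π 0)) ^ (2/p) * ((N:ℝ) ^ (2/p))⁻¹) := by
        have heq : |mu a b (π j) (π (j+1)) + mu a b (π (j+1)) (π (j+2))
            - mu a b (π j) (π (j+2))|
            = |mu a b (π j) (π (j+2))
              - (mu a b (π (j+1)) (π (j+2)) + mu a b (π j) (π (j+1)))| := by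
          rw [abs_sub_comm]; congr 1; ring
        rw [heq]
        refine hchen.trans ?_
        have hr1 : (π (j+2) - π j) ^ (2/p) ≤ (2 * (π (N+1) - π 0) / (N:ℝ)) ^ (2/p) :=
          Real.rpow_le_rpow (sub_nonneg.2 (hmono (by omega))) hjle (by positivity)
        have hr2 : (2 * (π (N+1) - π 0) / (N:ℝ)) ^ (2/p)
            = (2 * (π (N+1) - π 0)) ^ (2/p) * ((N:ℝ) ^ (2/p))⁻¹ := by
          rw [Real.div_rpow (by linarith) (Nat.cast_nonneg N), div_eq_mul_inv]
        rw [← hr2]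
        exact mul_le_mul_of_nonneg_left hr1 (by positivity)
      have hIH := ih π' hmono' (by rw [hπ'0]; exact h0) (by rw [hπ'N]; exact h1)
      rw [hπ'0, hπ'N] at hIH
      calc |(∑ k ∈ range (N+1), mu a b (π k) (π (k+1))) - mu a b (π 0) (π (N+1))|
          = |((∑ k ∈ range N, mu a b (π' k) (π' (k+1))) - mu a b (π 0) (π (N+1)))
            + (mu a b (π j) (π (j+1)) + mu a b (π (j+1)) (π (j+2))
               - mu a b (π j) (π (j+2)))| := by rw [key]; congr 1; ring
        _ ≤ |(∑ k ∈ range N, mu a b (π' k) (π' (k+1))) - mu a b (π 0) (π (N+1))|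
            + |mu a b (π j) (π (j+1)) + mu a b (π (j+1)) (π (j+2))
               - mu a b (π j) (π (j+2))| := abs_add_le _ _
        _ ≤ H ^ 2 * (2 * (π (N+1) - π 0)) ^ (2/p) * (∑ j ∈ range N, (j : ℝ) ^ (-(2/p)))
            + H ^ 2 * ((2 * (π (N+1) - π 0)) ^ (2/p) * ((N:ℝ) ^ (2/p))⁻¹) :=
            add_le_add hIH hdef
        _ = H ^ 2 * (2 * (π (N+1) - π 0)) ^ (2/p)
            * ∑ j ∈ range (N+1), (j : ℝ) ^ (-(2/p)) := by
            rw [Finset.sum_range_succ, Real.rpow_neg (Nat.cast_nonneg N)]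
            ring


lemma min_sub_min_le {u v w : ℝ} (h : u ≤ v) : min v w - min u w ≤ v - u := by
  rcases le_total u w with h2 | h2
  · rw [min_eq_left h2]
    exact sub_le_sub_right (min_le_left v w) u
  · rw [min_eq_right h2, min_eq_right (h2.trans h)]
    linarith

lemma sum_range_two_mul {M : Type*} [AddCommMonoid M] (m : ℕ) (g : ℕ → M) :
    ∑ j ∈ range (2*m), g j = ∑ k ∈ range m, (g (2*k) + g (2*k+1)) := by
  induction m with
  | zero => simp
  | succ m ih =>
    rw [show 2*(m+1) = (2*m+1)+1 from by ring, Finset.sum_range_succ,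
      Finset.sum_range_succ, Finset.sum_range_succ, ih, add_assoc]

noncomputable def phiseq (a b : ℝ → ℝ) (n : ℕ) (r : ℝ) : ℝ :=
  ∑ k ∈ range (2^n), mu a b (min ((k:ℝ)/2^n) r) (min (((k:ℝ)+1)/2^n) r)

lemma phiseq_zero (a b : ℝ → ℝ) (n : ℕ) : phiseq a b n 0 = 0 := by
  apply Finset.sum_eq_zero
  intro k _
  rw [min_eq_right (by positivity), min_eq_right (by positivity), mu_self]

lemma inv_pow_rpow (n : ℕ) (c : ℝ) : (((2:ℝ)^n)⁻¹) ^ c = ((2:ℝ) ^ (-c)) ^ n := by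
  rw [← Real.rpow_natCast 2 n, ← Real.rpow_neg (by norm_num),
    ← Real.rpow_mul (by norm_num), ← Real.rpow_natCast ((2:ℝ) ^ (-c)) n,
    ← Real.rpow_mul (by norm_num)]
  congr 1
  ring

lemma phiseq_step (hp1 : 1 ≤ p) (hH : 0 ≤ H)
    (ha : ∀ s t : ℝ, 0 ≤ s → s ≤ t → t ≤ 1 → |a t - a s| ≤ H * (t - s) ^ (1 / p))
    (hb : ∀ s t : ℝ, 0 ≤ s → s ≤ t → t ≤ 1 → |b t - b s| ≤ H * (t - s) ^ (1 / p))
    {t : ℝ} (ht0 : 0 ≤ t) (ht1 : t ≤ 1) (n : ℕ) :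
    |phiseq a b (n+1) t - phiseq a b n t|
      ≤ H ^ 2 * (2:ℝ)^n * (((2:ℝ)^n)⁻¹) ^ (2/p) := by
  have hp0 : 0 < p := by linarith
  have hsplit : phiseq a b (n+1) t = ∑ k ∈ range (2^n),
      (mu a b (min ((k:ℝ)/2^n) t) (min (((2*(k:ℝ))+1)/2^(n+1)) t)
        + mu a b (min (((2*(k:ℝ))+1)/2^(n+1)) t) (min (((k:ℝ)+1)/2^n) t)) := by
    unfold phiseq
    rw [show (2:ℕ)^(n+1) = 2 * 2^n from by ring, sum_range_two_mul]
    apply Finset.sum_congr rfl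
    intro k _
    have c1 : ((2*k:ℕ):ℝ)/2^(n+1) = (k:ℝ)/2^n := by
      push_cast
      rw [pow_succ]
      field_simp
    have c2 : (((2*k:ℕ):ℝ)+1)/2^(n+1) = ((2*(k:ℝ))+1)/2^(n+1) := by push_cast; ring
    have c3 : ((2*k+1:ℕ):ℝ)/2^(n+1) = ((2*(k:ℝ))+1)/2^(n+1) := by push_cast; ring
    have c4 : (((2*k+1:ℕ):ℝ)+1)/2^(n+1) = ((k:ℝ)+1)/2^n := by
      push_cast
      rw [pow_succ]
      field_simp
      ring
    rw [c1, c2, c3, c4]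
  have hbound : ∀ k ∈ range (2^n),
      |(mu a b (min ((k:ℝ)/2^n) t) (min (((2*(k:ℝ))+1)/2^(n+1)) t)
        + mu a b (min (((2*(k:ℝ))+1)/2^(n+1)) t) (min (((k:ℝ)+1)/2^n) t))
        - mu a b (min ((k:ℝ)/2^n) t) (min (((k:ℝ)+1)/2^n) t)|
      ≤ H^2 * (((2:ℝ)^n)⁻¹)^(2/p) := by
    intro k _
    have e1 : (k:ℝ)/2^n = (2*(k:ℝ))/2^(n+1) := by rw [pow_succ]; field_simp
    have e2 : ((k:ℝ)+1)/2^n = (2*(k:ℝ)+2)/2^(n+1) := by rw [pow_succ]; field_simp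
    have hxm : (k:ℝ)/2^n ≤ (2*(k:ℝ)+1)/2^(n+1) := by
      rw [e1]
      gcongr
      linarith
    have hmy : (2*(k:ℝ)+1)/2^(n+1) ≤ ((k:ℝ)+1)/2^n := by
      rw [e2]
      gcongr
      linarith
    set X := min ((k:ℝ)/2^n) t with hX
    set M := min (((2*(k:ℝ))+1)/2^(n+1)) t with hM
    set Y := min (((k:ℝ)+1)/2^n) t with hY
    have hXM : X ≤ M := min_le_min hxm le_rfl
    have hMY : M ≤ Y := min_le_min hmy le_rfl
    have hX0 : 0 ≤ X := le_min (by positivity) ht0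
    have hY1 : Y ≤ 1 := (min_le_right _ t).trans ht1
    have hchen := chen hp1 hH ha hb hX0 hXM hMY hY1
    have habs : |(mu a b X M + mu a b M Y) - mu a b X Y|
        = |mu a b X Y - (mu a b M Y + mu a b X M)| := by
      rw [abs_sub_comm]
      congr 1
      ring
    rw [habs]
    refine hchen.trans ?_
    have hYX : Y - X ≤ ((2:ℝ)^n)⁻¹ := by
      refine (min_sub_min_le (by linarith : (k:ℝ)/2^n ≤ ((k:ℝ)+1)/2^n)).trans (le_of_eq ?_)
      field_simp; ring
    have hr : (Y - X) ^ (2/p) ≤ (((2:ℝ)^n)⁻¹) ^ (2/p) :=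
      Real.rpow_le_rpow (by linarith) hYX (by positivity)
    exact mul_le_mul_of_nonneg_left hr (by positivity)
  calc |phiseq a b (n+1) t - phiseq a b n t|
      = |∑ k ∈ range (2^n),
          ((mu a b (min ((k:ℝ)/2^n) t) (min (((2*(k:ℝ))+1)/2^(n+1)) t)
            + mu a b (min (((2*(k:ℝ))+1)/2^(n+1)) t) (min (((k:ℝ)+1)/2^n) t))
           - mu a b (min ((k:ℝ)/2^n) t) (min (((k:ℝ)+1)/2^n) t))| := by
        rw [hsplit]
        unfold phiseq
        rw [← Finset.sum_sub_distrib]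
    _ ≤ ∑ k ∈ range (2^n),
          |(mu a b (min ((k:ℝ)/2^n) t) (min (((2*(k:ℝ))+1)/2^(n+1)) t)
            + mu a b (min (((2*(k:ℝ))+1)/2^(n+1)) t) (min (((k:ℝ)+1)/2^n) t))
           - mu a b (min ((k:ℝ)/2^n) t) (min (((k:ℝ)+1)/2^n) t)| :=
        Finset.abs_sum_le_sum_abs _ _
    _ ≤ ∑ _k ∈ range (2^n), (H^2 * (((2:ℝ)^n)⁻¹)^(2/p)) := Finset.sum_le_sum hbound
    _ = H^2 * (2:ℝ)^n * (((2:ℝ)^n)⁻¹)^(2/p) := by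
        rw [Finset.sum_const, Finset.card_range, nsmul_eq_mul]
        push_cast
        ring

lemma clip_eq_zero {x y s t : ℝ} (hxy : x ≤ y) (hst : s ≤ t) (h : s ≤ x ∨ y ≤ s) :
    mu a b (min x t) (min y t) - mu a b (min x s) (min y s)
      - mu a b (max (min x t) s) (max (min y t) s) = 0 := by
  rcases h with h | h
  · rw [min_eq_right h, min_eq_right (h.trans hxy),
      max_eq_left (le_min h hst), max_eq_left (le_min (h.trans hxy) hst), mu_self]
    ring
  · rw [min_eq_left ((hxy.trans h).trans hst), min_eq_left (h.trans hst),
      min_eq_left (hxy.trans h), min_eq_left h,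
      max_eq_right (hxy.trans h), max_eq_right h, mu_self]
    ring

lemma clip_bound (hp1 : 1 ≤ p) (hH : 0 ≤ H)
    (ha : ∀ s t : ℝ, 0 ≤ s → s ≤ t → t ≤ 1 → |a t - a s| ≤ H * (t - s) ^ (1 / p))
    (hb : ∀ s t : ℝ, 0 ≤ s → s ≤ t → t ≤ 1 → |b t - b s| ≤ H * (t - s) ^ (1 / p))
    {x y s t : ℝ} (hx0 : 0 ≤ x) (hxs : x ≤ s) (hsy : s ≤ y) (hst : s ≤ t) (ht1 : t ≤ 1) :
    |mu a b (min x t) (min y t) - mu a b (min x s) (min y s)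
      - mu a b (max (min x t) s) (max (min y t) s)| ≤ H ^ 2 * (y - x) ^ (2/p) := by
  have hp0 : 0 < p := by linarith
  have h1 : min x t = x := min_eq_left (hxs.trans hst)
  have h2 : min x s = x := min_eq_left hxs
  have h3 : min y s = s := min_eq_right hsy
  have h5 : max (min y t) s = min y t := max_eq_left (le_min hsy hst)
  rw [h1, h2, h3, h5, max_eq_right hxs]
  have habs : |mu a b x (min y t) - mu a b x s - mu a b s (min y t)|
      = |mu a b x (min y t) - (mu a b s (min y t) + mu a b x s)| := by
    congr 1
    ring
  rw [habs]
  have hchen := chen hp1 hH ha hb hx0 hxs (le_min hsy hst) ((min_le_right y t).trans ht1)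
  refine hchen.trans ?_
  have hr : (min y t - x) ^ (2/p) ≤ (y - x) ^ (2/p) :=
    Real.rpow_le_rpow (sub_nonneg.2 (le_min (hxs.trans hsy) (hxs.trans hst)))
      (sub_le_sub_right (min_le_left y t) x) (div_nonneg (by norm_num) hp0.le)
  exact mul_le_mul_of_nonneg_left hr (by positivity)

lemma phiseq_close (hp1 : 1 ≤ p) (hp2 : p < 2) (hH : 0 ≤ H)
    (ha : ∀ s t : ℝ, 0 ≤ s → s ≤ t → t ≤ 1 → |a t - a s| ≤ H * (t - s) ^ (1 / p))
    (hb : ∀ s t : ℝ, 0 ≤ s → s ≤ t → t ≤ 1 → |b t - b s| ≤ H * (t - s) ^ (1 / p))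
    {s t : ℝ} (hs : 0 ≤ s) (hst : s ≤ t) (ht : t ≤ 1) (n : ℕ) :
    |phiseq a b n t - phiseq a b n s - mu a b s t|
      ≤ H ^ 2 * (2*(t-s)) ^ (2/p) * (∑ j ∈ range (2^n), (j:ℝ) ^ (-(2/p)))
        + H ^ 2 * (((2:ℝ)^n)⁻¹) ^ (2/p) := by
  have hp0 : 0 < p := by linarith
  have ht0 : 0 ≤ t := hs.trans hst
  have h2n : (0:ℝ) < 2^n := by positivity
  set q : ℕ → ℝ := fun k => max (min ((k:ℝ)/2^n) t) s with hq
  have hqmono : Monotone q := by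
    intro i j hij
    simp only [hq]
    gcongr
  have hq0 : q 0 = s := by
    simp only [hq, Nat.cast_zero, zero_div]
    rw [min_eq_left ht0, max_eq_right hs]
  have hqN : q (2^n) = t := by
    simp only [hq]
    have hone : ((2^n:ℕ):ℝ)/2^n = 1 := by
      push_cast
      field_simp
    rw [hone, min_eq_right ht, max_eq_left hst]
  have hRS := young hp1 hp2 hH ha hb (2^n) q hqmono (by rw [hq0]; exact hs)
    (by rw [hqN]; exact ht)
  rw [hq0, hqN] at hRS
  set D : ℕ → ℝ := fun k =>
    mu a b (min ((k:ℝ)/2^n) t) (min (((k:ℝ)+1)/2^n) t)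
      - mu a b (min ((k:ℝ)/2^n) s) (min (((k:ℝ)+1)/2^n) s)
      - mu a b (q k) (q (k+1)) with hD
  have hqsucc : ∀ k : ℕ, q (k+1) = max (min (((k:ℝ)+1)/2^n) t) s := by
    intro k
    simp only [hq]
    norm_num
  have hdecomp : phiseq a b n t - phiseq a b n s
      - (∑ k ∈ range (2^n), mu a b (q k) (q (k+1))) = ∑ k ∈ range (2^n), D k := by
    unfold phiseq
    rw [← Finset.sum_sub_distrib, ← Finset.sum_sub_distrib]
  set k0 := Nat.floor (s * 2^n) with hk0
  have hfloor_le : (k0:ℝ) ≤ s * 2^n := Nat.floor_le (by positivity)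
  have hfloor_lt : s * 2^n < (k0:ℝ) + 1 := Nat.lt_floor_add_one _
  have hzero : ∀ k ∈ range (2^n), k ≠ k0 → D k = 0 := by
    intro k _ hkne
    have hxy : (k:ℝ)/2^n ≤ ((k:ℝ)+1)/2^n := by
      gcongr
      linarith
    rcases lt_or_gt_of_ne hkne with hlt | hgt
    · simp only [hD, hqsucc k]
      apply clip_eq_zero hxy hst
      refine Or.inr ?_
      have hcast : ((k:ℝ)+1) ≤ (k0:ℝ) := by exact_mod_cast Nat.succ_le_of_lt hlt
      rw [div_le_iff₀ h2n]
      linarith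
    · simp only [hD, hqsucc k]
      apply clip_eq_zero hxy hst
      refine Or.inl ?_
      have hcast : (k0:ℝ)+1 ≤ (k:ℝ) := by exact_mod_cast hgt
      rw [le_div_iff₀ h2n]
      linarith
  have hout : k0 ∉ range (2^n) → D k0 = 0 := by
    intro hk
    have hge : (2^n:ℕ) ≤ k0 := by simpa [Finset.mem_range, not_lt] using hk
    have hge' : ((2^n:ℕ):ℝ) ≤ s * 2^n := le_trans (by exact_mod_cast hge) hfloor_le
    have hs1 : 1 ≤ s := by
      push_cast at hge'
      nlinarith
    have hseq : s = t := le_antisymm hst (ht.trans hs1)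
    subst hseq
    have hq1 : q k0 = s := max_eq_right (min_le_right _ s)
    have hq2 : q (k0+1) = s := by
      rw [hqsucc k0]
      exact max_eq_right (min_le_right _ s)
    simp only [hD]
    rw [hq1, hq2, mu_self]
    ring
  have hsum : ∑ k ∈ range (2^n), D k = D k0 := Finset.sum_eq_single k0 hzero hout
  have hDk0 : |D k0| ≤ H ^ 2 * (((2:ℝ)^n)⁻¹) ^ (2/p) := by
    have hxs : (k0:ℝ)/2^n ≤ s := by
      rw [div_le_iff₀ h2n]
      linarith
    have hsy : s ≤ ((k0:ℝ)+1)/2^n := by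
      rw [le_div_iff₀ h2n]
      linarith
    have hyx : ((k0:ℝ)+1)/2^n - (k0:ℝ)/2^n = ((2:ℝ)^n)⁻¹ := by
      field_simp; ring
    simp only [hD, hqsucc k0]
    refine (clip_bound hp1 hH ha hb (by positivity) hxs hsy hst ht).trans (le_of_eq ?_)
    rw [hyx]
  calc |phiseq a b n t - phiseq a b n s - mu a b s t|
      = |((∑ k ∈ range (2^n), mu a b (q k) (q (k+1))) - mu a b s t)
          + ∑ k ∈ range (2^n), D k| := by
        congr 1
        linear_combination hdecomp
    _ ≤ |(∑ k ∈ range (2^n), mu a b (q k) (q (k+1))) - mu a b s t|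
          + |∑ k ∈ range (2^n), D k| := abs_add_le _ _
    _ ≤ H ^ 2 * (2*(t-s)) ^ (2/p) * (∑ j ∈ range (2^n), (j:ℝ) ^ (-(2/p)))
          + H ^ 2 * (((2:ℝ)^n)⁻¹) ^ (2/p) := by
        apply add_le_add hRS
        rw [hsum]
        exact hDk0

end YoungIntegralAux

/-- **Existence and uniqueness of the Young integral.** For `1 ≤ p < 2` and `(1/p)`-Hölder
functions `a, b : [0,1] → ℝ` with Hölder constant `H`, the germ `μ_{ts} = a_s (b_t - b_s)` is
almost additive with constant `H²` and exponent `2/p > 1`, and consequently there is a constant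
`C` and a unique function `φ` vanishing at `0` with
`|φ_t - φ_s - a_s (b_t - b_s)| ≤ C (t-s)^{2/p}`; `φ` is the Young integral `∫₀ᵗ a db`. -/
theorem young_integral
    (p H : ℝ) (hp1 : 1 ≤ p) (hp2 : p < 2) (hH : 0 ≤ H)
    (a b : ℝ → ℝ)
    (ha : ∀ s t : ℝ, 0 ≤ s → s ≤ t → t ≤ 1 → |a t - a s| ≤ H * (t - s) ^ (1 / p))
    (hb : ∀ s t : ℝ, 0 ≤ s → s ≤ t → t ≤ 1 → |b t - b s| ≤ H * (t - s) ^ (1 / p)) :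
    (∀ s u t : ℝ, 0 ≤ s → s ≤ u → u ≤ t → t ≤ 1 →
      |a s * (b t - b s) - (a u * (b t - b u) + a s * (b u - b s))| ≤
        H ^ 2 * (t - s) ^ (2 / p)) ∧
    ∃ C : ℝ, ∃ φ : ℝ → ℝ, φ 0 = 0 ∧
      (∀ s t : ℝ, 0 ≤ s → s ≤ t → t ≤ 1 →
        |φ t - φ s - a s * (b t - b s)| ≤ C * (t - s) ^ (2 / p)) ∧
      ∀ ψ₁ ψ₂ : ℝ → ℝ, ψ₁ 0 = 0 → ψ₂ 0 = 0 →
        (∃ C₁ : ℝ, ∀ s t : ℝ, 0 ≤ s → s ≤ t → t ≤ 1 →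
          |ψ₁ t - ψ₁ s - a s * (b t - b s)| ≤ C₁ * (t - s) ^ (2 / p)) →
        (∃ C₂ : ℝ, ∀ s t : ℝ, 0 ≤ s → s ≤ t → t ≤ 1 →
          |ψ₂ t - ψ₂ s - a s * (b t - b s)| ≤ C₂ * (t - s) ^ (2 / p)) →
        ∀ t : ℝ, 0 ≤ t → t ≤ 1 → ψ₁ t = ψ₂ t := by
  classical
  have hp0 : 0 < p := by linarith
  have hθ : 1 < 2/p := by
    rw [lt_div_iff₀ hp0]
    linarith
  constructor
  · intro s u t hs hsu hut ht
    simpa [YoungIntegralAux.mu] using YoungIntegralAux.chen hp1 hH ha hb hs hsu hut ht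
  · set Z : ℝ := ∑' j : ℕ, (j:ℝ) ^ (-(2/p)) with hZ
    have hsummable : Summable (fun j : ℕ => (j:ℝ) ^ (-(2/p))) :=
      Real.summable_nat_rpow.2 (by linarith)
    have hZ0 : 0 ≤ Z := tsum_nonneg fun j => Real.rpow_nonneg (Nat.cast_nonneg j) _
    set r : ℝ := (2:ℝ) ^ ((1:ℝ) - 2/p) with hr
    have hr1 : r < 1 := Real.rpow_lt_one_of_one_lt_of_neg (by norm_num) (by linarith)
    have hgeom : ∀ n : ℕ, (2:ℝ)^n * (((2:ℝ)^n)⁻¹) ^ (2/p) = r ^ n := by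
      intro n
      rw [YoungIntegralAux.inv_pow_rpow n (2/p), ← mul_pow]
      congr 1
      rw [hr, sub_eq_add_neg, Real.rpow_add (by norm_num : (0:ℝ) < 2), Real.rpow_one]
    have hcauchy : ∀ t : ℝ, 0 ≤ t → t ≤ 1 →
        CauchySeq (fun n => YoungIntegralAux.phiseq a b n t) := by
      intro t ht0 ht1
      apply cauchySeq_of_le_geometric r (H^2) hr1
      intro n
      rw [Real.dist_eq, abs_sub_comm]
      calc |YoungIntegralAux.phiseq a b (n+1) t - YoungIntegralAux.phiseq a b n t|
          ≤ H^2 * (2:ℝ)^n * (((2:ℝ)^n)⁻¹) ^ (2/p) :=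
            YoungIntegralAux.phiseq_step hp1 hH ha hb ht0 ht1 n
        _ = H^2 * r^n := by rw [mul_assoc, hgeom n]
    set φ : ℝ → ℝ := fun t => limUnder atTop (fun n => YoungIntegralAux.phiseq a b n t) with hφ
    have htend : ∀ t : ℝ, 0 ≤ t → t ≤ 1 →
        Tendsto (fun n => YoungIntegralAux.phiseq a b n t) atTop (nhds (φ t)) :=
      fun t h1 h2 => (hcauchy t h1 h2).tendsto_limUnder
    refine ⟨H^2 * 2^(2/p) * Z, φ, ?_, ?_, ?_⟩
    · have hcz : (fun n => YoungIntegralAux.phiseq a b n 0) = fun _ => (0:ℝ) :=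
        funext fun n => YoungIntegralAux.phiseq_zero a b n
      simp only [hφ, hcz]
      exact tendsto_const_nhds.limUnder_eq
    · intro s t hs hst ht
      have h1 : Tendsto (fun n => |YoungIntegralAux.phiseq a b n t
          - YoungIntegralAux.phiseq a b n s - YoungIntegralAux.mu a b s t|) atTop
          (nhds |φ t - φ s - YoungIntegralAux.mu a b s t|) :=
        (((htend t (hs.trans hst) ht).sub (htend s hs (hst.trans ht))).sub tendsto_const_nhds).abs
      have h2 : Tendsto (fun n : ℕ => H^2 * (2*(t-s))^(2/p) * Z + H^2 * ((2:ℝ)^(-(2/p)))^n) atTop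
          (nhds (H^2 * (2*(t-s))^(2/p) * Z)) := by
        have hmul := (tendsto_pow_atTop_nhds_zero_of_lt_one
          (Real.rpow_nonneg (by norm_num : (0:ℝ) ≤ 2) _)
          (Real.rpow_lt_one_of_one_lt_of_neg (by norm_num) (by linarith : -(2/p) < 0))).const_mul
          (H^2)
        simpa using tendsto_const_nhds.add hmul
      have hle : ∀ n : ℕ, |YoungIntegralAux.phiseq a b n t
          - YoungIntegralAux.phiseq a b n s - YoungIntegralAux.mu a b s t|
          ≤ H^2 * (2*(t-s))^(2/p) * Z + H^2 * ((2:ℝ)^(-(2/p)))^n := by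
        intro n
        refine (YoungIntegralAux.phiseq_close hp1 hp2 hH ha hb hs hst ht n).trans ?_
        apply add_le_add
        · apply mul_le_mul_of_nonneg_left _
            (mul_nonneg (by positivity) (Real.rpow_nonneg (by linarith) _))
          exact Summable.sum_le_tsum (Finset.range (2^n))
            (fun i _ => Real.rpow_nonneg (Nat.cast_nonneg i) _) hsummable
        · rw [YoungIntegralAux.inv_pow_rpow n (2/p)]
      have hfinal := le_of_tendsto_of_tendsto' h1 h2 hle
      have hmr : (2*(t-s))^(2/p) = 2^(2/p) * (t-s)^(2/p) :=
        Real.mul_rpow (by norm_num) (by linarith)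
      calc |φ t - φ s - a s * (b t - b s)|
          = |φ t - φ s - YoungIntegralAux.mu a b s t| := rfl
        _ ≤ H^2 * (2*(t-s))^(2/p) * Z := hfinal
        _ = H^2 * 2^(2/p) * Z * (t-s)^(2/p) := by rw [hmr]; ring
    · rintro ψ₁ ψ₂ h10 h20 ⟨C₁, h1⟩ ⟨C₂, h2⟩ t ht0 ht1
      have key : ∀ n : ℕ, 1 ≤ n →
          |ψ₁ t - ψ₂ t| ≤ (C₁+C₂) * t^(2/p) * (n:ℝ)^((1:ℝ)-2/p) := by
        intro n hn
        have hnpos : (0:ℝ) < n := by exact_mod_cast hn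
        set f : ℕ → ℝ := fun k => ψ₁ ((k:ℝ)*t/n) - ψ₂ ((k:ℝ)*t/n) with hf
        have hf0 : f 0 = 0 := by simp [hf, h10, h20]
        have hfn : f n = ψ₁ t - ψ₂ t := by
          simp only [hf]
          rw [mul_comm, mul_div_assoc, div_self (ne_of_gt hnpos), mul_one]
        have hstep : ∀ k ∈ Finset.range n, |f (k+1) - f k| ≤ (C₁+C₂) * (t/n)^(2/p) := by
          intro k hk
          have hk' : k < n := Finset.mem_range.1 hk
          have hkn : ((k:ℝ)+1) ≤ (n:ℝ) := by exact_mod_cast hk'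
          set u := (k:ℝ)*t/n with hu
          set v := ((k:ℝ)+1)*t/n with hv
          have hu0 : 0 ≤ u := by
            rw [hu]
            positivity
          have huv : u ≤ v := by
            rw [hu, hv]
            gcongr
            nlinarith
          have hv1 : v ≤ 1 := by
            rw [hv, div_le_one hnpos]
            nlinarith
          have e1 := h1 u v hu0 huv hv1
          have e2 := h2 u v hu0 huv hv1
          have hvu : v - u = t/n := by
            rw [hu, hv]
            field_simp
            ring
          have hcast : f (k+1) = ψ₁ v - ψ₂ v := by
            simp only [hf]
            push_cast
            rw [hv]
          have heq : f (k+1) - f k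
              = (ψ₁ v - ψ₁ u - a u * (b v - b u))
                - (ψ₂ v - ψ₂ u - a u * (b v - b u)) := by
            rw [hcast]
            simp only [hf]
            rw [← hu]
            ring
          rw [heq]
          calc |(ψ₁ v - ψ₁ u - a u * (b v - b u))
                - (ψ₂ v - ψ₂ u - a u * (b v - b u))|
              ≤ |ψ₁ v - ψ₁ u - a u * (b v - b u)|
                + |ψ₂ v - ψ₂ u - a u * (b v - b u)| := abs_sub _ _
            _ ≤ C₁*(v-u)^(2/p) + C₂*(v-u)^(2/p) := add_le_add e1 e2
            _ = (C₁+C₂) * (t/n)^(2/p) := by rw [hvu]; ring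
        have htele : ψ₁ t - ψ₂ t = ∑ k ∈ Finset.range n, (f (k+1) - f k) := by
          rw [Finset.sum_range_sub f n, hf0, hfn, sub_zero]
        have hnn : (n:ℝ)^((1:ℝ)-2/p) = (n:ℝ) * ((n:ℝ)^(2/p))⁻¹ := by
          rw [sub_eq_add_neg, Real.rpow_add hnpos, Real.rpow_one, Real.rpow_neg hnpos.le]
        calc |ψ₁ t - ψ₂ t| = |∑ k ∈ Finset.range n, (f (k+1) - f k)| := by rw [← htele]
          _ ≤ ∑ k ∈ Finset.range n, |f (k+1) - f k| := Finset.abs_sum_le_sum_abs _ _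
          _ ≤ ∑ _k ∈ Finset.range n, ((C₁+C₂) * (t/n)^(2/p)) := Finset.sum_le_sum hstep
          _ = (n:ℝ) * ((C₁+C₂) * (t/n)^(2/p)) := by
              rw [Finset.sum_const, Finset.card_range, nsmul_eq_mul]
          _ = (C₁+C₂) * t^(2/p) * (n:ℝ)^((1:ℝ)-2/p) := by
              rw [Real.div_rpow ht0 hnpos.le, hnn, div_eq_mul_inv]
              ring
      have hlim : Tendsto (fun n : ℕ => (C₁+C₂) * t^(2/p) * (n:ℝ)^((1:ℝ)-2/p)) atTop
          (nhds 0) := by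
        have h0 : Tendsto (fun n : ℕ => (n:ℝ)^((1:ℝ)-2/p)) atTop (nhds 0) := by
          have ha1 := tendsto_rpow_neg_atTop (show (0:ℝ) < 2/p - 1 by linarith)
          have ha2 := ha1.comp (tendsto_natCast_atTop_atTop (R := ℝ))
          simpa [Function.comp_def, neg_sub] using ha2
        simpa using h0.const_mul ((C₁+C₂) * t^(2/p))
      have hle0 : |ψ₁ t - ψ₂ t| ≤ 0 :=
        ge_of_tendsto hlim (eventually_atTop.2 ⟨1, fun n hn => key n hn⟩)
      have h00 : ψ₁ t - ψ₂ t = 0 :=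
        abs_eq_zero.1 (le_antisymm hle0 (abs_nonneg _))
      linarith
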